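/- In a partial cube, if C is a cycle and e an edge of C, then C contains another edge (distinct from e) in relation Θ with e. -/

import Mathlib

open SimpleGraph

universe u

variable {V : Type u}

/-- The Djoković–Winkler relation on ordered pairs of vertices:
`ab Θ xy` iff `d(a,x) + d(b,y) ≠ d(a,y) + d(b,x)`. -/
def ThetaV (G : SimpleGraph V) (a b x y : V) : Prop :=
  G.dist a x + G.dist b y ≠ G.dist a y + G.dist b x

/-- The Djoković–Winkler relation `Θ` on unordered edges. -/
def Theta (G : SimpleGraph V) (e f : Sym2 V) : Prop :=
  ∃ a b x y : V, e = s(a, b) ∧ f = s(x, y) ∧ ThetaV G a b x y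

/-- A partial cube: a connected graph isometrically embeddable into a hypercube,
i.e. there is a map to boolean vectors such that graph distance equals Hamming distance. -/
def IsPartialCube (G : SimpleGraph V) : Prop :=
  G.Connected ∧ ∃ (I : Type u) (h : V → I → Bool),
    ∀ u v : V, {i : I | h u i ≠ h v i}.Finite ∧ G.dist u v = {i : I | h u i ≠ h v i}.ncard

/-- A set of vertices is convex if it contains every shortest path between its members. -/
def IsConvexSet (G : SimpleGraph V) (S : Set V) : Prop :=
  ∀ u ∈ S, ∀ v ∈ S, ∀ p : G.Walk u v, p.length = G.dist u v → ∀ x ∈ p.support, x ∈ S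

/-- `W_{uv}`: vertices strictly closer to `u` than to `v`. -/
def Wset (G : SimpleGraph V) (u v : V) : Set V := {w | G.dist u w < G.dist v w}

/-- `U_{uv}`: vertices of `W_{uv}` with a neighbour in `W_{vu}`. -/
def Uset (G : SimpleGraph V) (u v : V) : Set V :=
  {w | w ∈ Wset G u v ∧ ∃ z, G.Adj w z ∧ z ∈ Wset G v u}

/-- The interval `I(a,b)`: vertices lying on some shortest `a,b`-path. -/
def GInterval (G : SimpleGraph V) (a b : V) : Set V :=
  {x | G.dist a x + G.dist x b = G.dist a b}

/-- An isometric cycle: distances along the cycle agree with distances in `G`. -/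
def IsIsometricCycle (G : SimpleGraph V) {u : V} (c : G.Walk u u) : Prop :=
  c.IsCycle ∧ ∀ i j : ℕ, i ≤ c.length → j ≤ c.length →
    G.dist (c.getVert i) (c.getVert j) =
      min (max i j - min i j) (c.length - (max i j - min i j))

/-- A convex cycle: a cycle whose vertex set is convex. -/
def IsConvexCycle (G : SimpleGraph V) {u : V} (c : G.Walk u u) : Prop :=
  c.IsCycle ∧ IsConvexSet G {x | x ∈ c.support}

/-- `S` and `E` are the vertex set and edge set of an isometric cycle of `G`. -/
def IsIsometricCycleOn (G : SimpleGraph V) (S : Set V) (E : Set (Sym2 V)) : Prop :=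
  ∃ (u : V) (c : G.Walk u u), IsIsometricCycle G c ∧
    S = {x | x ∈ c.support} ∧ E = {e | e ∈ c.edges}

/-- `S` and `E` are the vertex set and edge set of a convex cycle of `G`. -/
def IsConvexCycleOn (G : SimpleGraph V) (S : Set V) (E : Set (Sym2 V)) : Prop :=
  ∃ (u : V) (c : G.Walk u u), IsConvexCycle G c ∧
    S = {x | x ∈ c.support} ∧ E = {e | e ∈ c.edges}

/-- A traverse from the edge `v1u1` to the edge `v2u2`: a sequence of isometric cycles,
given by their vertex sets `S i` and edge sets `E i`, such that `v1u1` lies only on the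
first cycle, `v2u2` lies only on the last one, consecutive cycles meet in exactly one
edge which is `Θ`-related to `v1u1`, non-consecutive cycles are disjoint, and a shortest
`v1,v2`-path of `G` runs along the union of the cycles. -/
def IsTraverse (G : SimpleGraph V) (v1 u1 v2 u2 : V) {n : ℕ}
    (S : Fin n → Set V) (E : Fin n → Set (Sym2 V)) : Prop :=
  1 ≤ n ∧
  (∀ i, IsIsometricCycleOn G (S i) (E i)) ∧
  (∀ i : Fin n, s(v1, u1) ∈ E i ↔ (i : ℕ) = 0) ∧
  (∀ i : Fin n, s(v2, u2) ∈ E i ↔ (i : ℕ) = n - 1) ∧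
  (∀ i j : Fin n, (i : ℕ) + 1 = (j : ℕ) →
    ∃ x y : V, G.Adj x y ∧ Theta G s(x, y) s(v1, u1) ∧
      S i ∩ S j = {x, y} ∧ E i ∩ E j = {s(x, y)}) ∧
  (∀ i j : Fin n, (i : ℕ) + 1 < (j : ℕ) → S i ∩ S j = ∅) ∧
  (∃ p : G.Walk v1 v2, p.length = G.dist v1 v2 ∧ ∀ e ∈ p.edges, ∃ i, e ∈ E i)

/-- A convex traverse: a traverse all of whose cycles are convex. -/
def IsConvexTraverse (G : SimpleGraph V) (v1 u1 v2 u2 : V) {n : ℕ}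
    (S : Fin n → Set V) (E : Fin n → Set (Sym2 V)) : Prop :=
  IsTraverse G v1 u1 v2 u2 S E ∧ ∀ i, IsConvexSet G (S i)

/-- Two cycles intertwine if they share a path with at least two edges and all their
other vertices are pairwise distinct. -/
def Intertwine (G : SimpleGraph V) {a b : V} (c1 : G.Walk a a) (c2 : G.Walk b b) : Prop :=
  ∃ (x y : V) (p : G.Walk x y), p.IsPath ∧ 2 ≤ p.length ∧
    (∀ e ∈ p.edges, e ∈ c1.edges ∧ e ∈ c2.edges) ∧
    {z | z ∈ c1.support} ∩ {z | z ∈ c2.support} = {z | z ∈ p.support}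

private lemma walk_parity {G : SimpleGraph V} {s t : V} (p : G.Walk s t)
    (f : Sym2 V → Bool) (g : V → Bool)
    (hf : ∀ x y : V, f s(x,y) = true ↔ g x ≠ g y) :
    (Odd (p.edges.countP f) ↔ g s ≠ g t) := by
  induction p with
  | nil => simp [Nat.odd_iff]
  | @cons a b w hadj q ih =>
    rw [Walk.edges_cons, List.countP_cons, Nat.odd_iff]
    rw [Nat.odd_iff] at ih
    by_cases hab : g a = g b
    · rw [if_neg (by simp [hf, hab]), add_zero, ih, hab]
    · rw [if_pos ((hf a b).mpr hab)]
      cases ha : g a <;> cases hb : g b <;> cases hw : g w <;> simp_all <;> omega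

/-- in a partial cube, every edge of a cycle is `Θ`-related to another
edge of the cycle. -/
theorem stmt4 (G : SimpleGraph V) (h : IsPartialCube G) {u : V}
    (c : G.Walk u u) (hc : c.IsCycle) (e : Sym2 V) (he : e ∈ c.edges) :
    ∃ f ∈ c.edges, f ≠ e ∧ Theta G e f := by
  classical
  obtain ⟨hconn, I, hh, hspec⟩ := h
  set D : V → V → Set I := fun v w => {i : I | hh v i ≠ hh w i} with hD
  have hfin : ∀ v w : V, (D v w).Finite := fun v w => (hspec v w).1
  have hd : ∀ v w : V, G.dist v w = (D v w).ncard := fun v w => (hspec v w).2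
  -- the edge e = s(a,b)
  obtain ⟨a, b⟩ := e
  have hadj : G.Adj a b := c.adj_of_mem_edges he
  have hdab : (D a b).ncard = 1 := by rw [← hd]; exact (dist_eq_one_iff_adj).mpr hadj
  obtain ⟨i, hi⟩ := Set.ncard_eq_one.mp hdab
  have hiab : hh a i ≠ hh b i := by
    have : i ∈ D a b := by rw [hi]; rfl
    exact this
  -- the flip predicate
  set f : Sym2 V → Bool := Sym2.lift ⟨fun x y => xor (hh x i) (hh y i),
    fun x y => Bool.xor_comm _ _⟩ with hfdef
  have hf : ∀ x y : V, f s(x,y) = true ↔ hh x i ≠ hh y i := by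
    intro x y
    simp only [hfdef, Sym2.lift_mk]
    cases hx : hh x i <;> cases hy : hh y i <;> simp
  -- evenness of the number of flipping edges on the closed walk
  have heven : ¬ Odd (c.edges.countP f) := by
    rw [walk_parity c f (fun v => hh v i) hf]
    simp
  have hfe : f s(a, b) = true := (hf a b).mpr hiab
  -- find a second flipping edge
  have hperm : c.edges.Perm (s(a,b) :: c.edges.erase s(a,b)) := List.perm_cons_erase he
  have hcount : c.edges.countP f = ((c.edges.erase s(a,b)).countP f) + 1 := by
    rw [hperm.countP_eq, List.countP_cons, if_pos hfe]
  have hpos : 0 < (c.edges.erase s(a,b)).countP f := by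
    rcases Nat.eq_zero_or_pos ((c.edges.erase s(a,b)).countP f) with h0 | h0
    · exfalso; apply heven; rw [hcount, h0]; simp
    · exact h0
  obtain ⟨g, hg_mem, hg_flip⟩ := List.countP_pos_iff.mp hpos
  have hnodup : c.edges.Nodup := hc.edges_nodup
  have hgne : g ≠ s(a, b) := (List.Nodup.mem_erase_iff hnodup).mp hg_mem |>.1
  have hg_edges : g ∈ c.edges := ((List.Nodup.mem_erase_iff hnodup).mp hg_mem).2
  refine ⟨g, hg_edges, hgne, ?_⟩
  -- unpack g = s(x, y)
  obtain ⟨⟨x, y⟩, rfl⟩ := g.exists_rep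
  have hxyadj : G.Adj x y := c.adj_of_mem_edges hg_edges
  have hixy : hh x i ≠ hh y i := (hf x y).mp hg_flip
  refine ⟨a, b, x, y, rfl, rfl, ?_⟩
  -- the Theta computation
  have hdxy : (D x y).ncard = 1 := by rw [← hd]; exact (dist_eq_one_iff_adj).mpr hxyadj
  have hxy_single : D x y = {i} := by
    obtain ⟨j, hj⟩ := Set.ncard_eq_one.mp hdxy
    have : i ∈ D x y := hixy
    rw [hj] at this ⊢
    rw [Set.mem_singleton_iff] at this
    rw [this]
  have hab_other : ∀ j, j ≠ i → hh a j = hh b j := by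
    intro j hj
    by_contra hne
    have : j ∈ D a b := hne
    rw [hi, Set.mem_singleton_iff] at this
    exact hj this
  have hxy_other : ∀ j, j ≠ i → hh x j = hh y j := by
    intro j hj
    by_contra hne
    have : j ∈ D x y := hne
    rw [hxy_single, Set.mem_singleton_iff] at this
    exact hj this
  have h1 : D b y = D a x := by
    ext j
    simp only [hD, Set.mem_setOf_eq]
    by_cases hj : j = i
    · subst hj
      cases h1 : hh a j <;> cases h2 : hh b j <;> cases h3 : hh x j <;> cases h4 : hh y j <;>
        simp_all
    · rw [hab_other j hj, hxy_other j hj]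
  have h2 : D b x = D a y := by
    ext j
    simp only [hD, Set.mem_setOf_eq]
    by_cases hj : j = i
    · subst hj
      cases h1 : hh a j <;> cases h2 : hh b j <;> cases h3 : hh x j <;> cases h4 : hh y j <;>
        simp_all
    · rw [hab_other j hj, hxy_other j hj]
  have h3 : (D a y).ncard ≠ (D a x).ncard := by
    by_cases hmem : i ∈ D a x
    · have hsub : D a y = D a x \ {i} := by
        ext j
        simp only [hD, Set.mem_setOf_eq, Set.mem_diff, Set.mem_singleton_iff]
        by_cases hj : j = i
        · subst hj
          have : hh a j ≠ hh x j := hmem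
          cases h1 : hh a j <;> cases h3 : hh x j <;> cases h4 : hh y j <;> simp_all
        · rw [hxy_other j hj]; tauto
      have hcard : (D a x).ncard ≠ 0 := by
        intro h0
        rw [Set.ncard_eq_zero (hfin a x)] at h0
        rw [h0] at hmem
        exact hmem
      rw [hsub, Set.ncard_diff_singleton_of_mem hmem]
      omega
    · have hsub : D a y = insert i (D a x) := by
        ext j
        simp only [hD, Set.mem_setOf_eq, Set.mem_insert_iff]
        by_cases hj : j = i
        · subst hj
          have : ¬ (hh a j ≠ hh x j) := hmem
          cases h1 : hh a j <;> cases h3 : hh x j <;> cases h4 : hh y j <;> simp_all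
        · rw [hxy_other j hj]; tauto
      rw [hsub, Set.ncard_insert_of_notMem hmem (hs := hfin a x)]
      omega
  show ThetaV G a b x y
  unfold ThetaV
  rw [hd a x, hd b y, hd a y, hd b x, h1, h2]
  omega
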